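/- Let Ω ⊂ ℝⁿ be a bounded measurable set of positive measure, p ≥ 1, and g : Ω → ℝ measurable with 0 < ‖g‖_p ≤ 1 and ⨍_Ω |g|^p log(e + |g|) dx < ∞. Then ⨍_Ω |g|^p · log(e + |g|/‖g‖_p) dx ≤ ⨍_Ω |g|^p·log(e + |g|) dx + (1/e)·‖g‖_p^{p−1}. -/

import Mathlib

open Real MeasureTheory

variable {n : ℕ}

/-- The mean `L^p` norm `‖g‖_p = (⨍_Ω |g|^p)^{1/p}` (with mean integral). -/
noncomputable def meanLpNorm (Ω : Set (EuclideanSpace ℝ (Fin n))) (p : ℝ)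
    (g : EuclideanSpace ℝ (Fin n) → ℝ) : ℝ :=
  (⨍ x in Ω, |g x| ^ p) ^ (1 / p)

lemma log_key_aux {s t : ℝ} (hs : 0 ≤ s) (ht : 1 ≤ t) :
    Real.log (Real.exp 1 + s * t) ≤ Real.log (Real.exp 1 + s) + Real.log t := by
  have he : (0:ℝ) < Real.exp 1 := Real.exp_pos 1
  rw [← Real.log_mul (by positivity) (by linarith)]
  apply Real.log_le_log (by positivity)
  nlinarith

lemma log_le_div_e {x : ℝ} (hx : 0 < x) : Real.log x ≤ x / Real.exp 1 := by
  have he : (0:ℝ) < Real.exp 1 := Real.exp_pos 1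
  have h1 : Real.log (x / Real.exp 1) ≤ x / Real.exp 1 - 1 :=
    Real.log_le_sub_one_of_pos (by positivity)
  have h2 : Real.log x = Real.log (x / Real.exp 1) + 1 := by
    rw [Real.log_div (ne_of_gt hx) (ne_of_gt he), Real.log_exp]
    ring
  linarith

theorem mean_log_normalized_le (Ω : Set (EuclideanSpace ℝ (Fin n)))
    (hΩm : MeasurableSet Ω) (hΩfin : volume Ω < ⊤) (hΩpos : 0 < volume Ω)
    (p : ℝ) (hp : 1 ≤ p)
    (g : EuclideanSpace ℝ (Fin n) → ℝ) (hg : Measurable g)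
    (hint : Integrable (fun x => |g x| ^ p) (volume.restrict Ω))
    (hintlog : Integrable (fun x => |g x| ^ p * Real.log (Real.exp 1 + |g x|))
      (volume.restrict Ω))
    (h0 : 0 < meanLpNorm Ω p g) (h1 : meanLpNorm Ω p g ≤ 1) :
    ⨍ x in Ω, |g x| ^ p * Real.log (Real.exp 1 + |g x| / meanLpNorm Ω p g) ≤
      (⨍ x in Ω, |g x| ^ p * Real.log (Real.exp 1 + |g x|)) +
        (1 / Real.exp 1) * meanLpNorm Ω p g ^ (p - 1) := by
  set N := meanLpNorm Ω p g with hNdef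
  have he : (0:ℝ) < Real.exp 1 := Real.exp_pos 1
  have hppos : (0:ℝ) < p := lt_of_lt_of_le one_pos hp
  have hNinv : 1 ≤ 1 / N := by
    rw [le_div_iff₀ h0]; linarith
  -- pointwise bound
  have hpt : ∀ x, |g x| ^ p * Real.log (Real.exp 1 + |g x| / N) ≤
      |g x| ^ p * Real.log (Real.exp 1 + |g x|) + |g x| ^ p * Real.log (1 / N) := by
    intro x
    have h := log_key_aux (abs_nonneg (g x)) hNinv
    have hb : (0:ℝ) ≤ |g x| ^ p := Real.rpow_nonneg (abs_nonneg _) p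
    have : |g x| / N = |g x| * (1 / N) := by ring
    rw [this]
    nlinarith [h, hb]
  -- measurability of LHS function
  have hmeas : Measurable fun x => |g x| ^ p * Real.log (Real.exp 1 + |g x| / N) := by
    exact (hg.abs.pow_const p).mul
      ((measurable_const.add (hg.abs.div_const N)).log)
  -- RHS integrable
  have hRHSint : Integrable (fun x => |g x| ^ p * Real.log (Real.exp 1 + |g x|) +
      |g x| ^ p * Real.log (1 / N)) (volume.restrict Ω) :=
    hintlog.add (hint.mul_const _)
  -- LHS nonneg
  have hLnn : ∀ x, 0 ≤ |g x| ^ p * Real.log (Real.exp 1 + |g x| / N) := by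
    intro x
    have hb : (0:ℝ) ≤ |g x| ^ p := Real.rpow_nonneg (abs_nonneg _) p
    have : (1:ℝ) ≤ Real.exp 1 + |g x| / N := by
      have : (0:ℝ) ≤ |g x| / N := div_nonneg (abs_nonneg _) h0.le
      nlinarith [Real.add_one_le_exp (1:ℝ)]
    have := Real.log_nonneg this
    positivity
  -- LHS integrable
  have hLint : Integrable (fun x => |g x| ^ p * Real.log (Real.exp 1 + |g x| / N))
      (volume.restrict Ω) := by
    apply hRHSint.mono' hmeas.aestronglyMeasurable
    filter_upwards with x
    rw [Real.norm_eq_abs, abs_of_nonneg (hLnn x)]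
    exact hpt x
  -- average facts
  have hc : (0:ℝ) ≤ ((volume.restrict Ω) Set.univ).toReal⁻¹ := by positivity
  have hA : (⨍ x in Ω, |g x| ^ p) = N ^ p := by
    have hAnn : (0:ℝ) ≤ ⨍ x in Ω, |g x| ^ p := by
      rw [average_eq]
      simp only [smul_eq_mul]
      exact mul_nonneg hc (integral_nonneg fun x => Real.rpow_nonneg (abs_nonneg _) p)
    rw [hNdef, meanLpNorm, ← Real.rpow_mul hAnn, one_div,
      inv_mul_cancel₀ (ne_of_gt hppos), Real.rpow_one]
  have step1 : ⨍ x in Ω, |g x| ^ p * Real.log (Real.exp 1 + |g x| / N) ≤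
      ⨍ x in Ω, (|g x| ^ p * Real.log (Real.exp 1 + |g x|) +
        |g x| ^ p * Real.log (1 / N)) := by
    rw [average_eq, average_eq]
    simp only [smul_eq_mul]
    exact mul_le_mul_of_nonneg_left (integral_mono hLint hRHSint hpt) hc
  have step2 : ⨍ x in Ω, (|g x| ^ p * Real.log (Real.exp 1 + |g x|) +
        |g x| ^ p * Real.log (1 / N)) =
      (⨍ x in Ω, |g x| ^ p * Real.log (Real.exp 1 + |g x|)) +
        Real.log (1 / N) * N ^ p := by
    rw [average_eq, average_eq, smul_eq_mul, smul_eq_mul,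
      integral_add hintlog (hint.mul_const _), integral_mul_const]
    rw [← hA, average_eq, smul_eq_mul]
    ring
  have step3 : Real.log (1 / N) * N ^ p ≤ (1 / Real.exp 1) * N ^ (p - 1) := by
    have hlog : Real.log (1 / N) ≤ (1 / N) / Real.exp 1 := log_le_div_e (by positivity)
    have hNp : (0:ℝ) < N ^ p := Real.rpow_pos_of_pos h0 p
    have hNpm : N ^ (p - 1) = N ^ p / N := by
      rw [Real.rpow_sub h0, Real.rpow_one]
    rw [hNpm]
    calc Real.log (1 / N) * N ^ p ≤ ((1 / N) / Real.exp 1) * N ^ p :=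
          mul_le_mul_of_nonneg_right hlog hNp.le
      _ = (1 / Real.exp 1) * (N ^ p / N) := by
          field_simp [h0.ne', he.ne']
  calc ⨍ x in Ω, |g x| ^ p * Real.log (Real.exp 1 + |g x| / N) ≤ _ := step1
    _ = _ := step2
    _ ≤ _ := add_le_add_right step3 _
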